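/- arXiv:2506.11628 — 4 statements merged into one kernel-verified Lean document; each statement's English description precedes it below -/
import Mathlib

section
/- Let s ≥ 2, v ≥ 1, and ℓ_b = (2v−1)(s−1) + 2v. If integers i, i' with 1 ≤ i, i' ≤ s and j, k satisfy (1/2)ℓ_b < j ≤ ℓ_b, 2 ≤ k ≤ ℓ_b, and (i'−1)ℓ_b ≤ (i−1)ℓ_b + j − k < (i'−1/2)ℓ_b, then i = i'. -/
/-- The key inequality in Lemma 3: with `s ≥ 2`, `v ≥ 1`, `ℓ_b = (2v−1)(s−1)+2v`,
if `1 ≤ i, i' ≤ s`, `(1/2)ℓ_b < j ≤ ℓ_b`, `2 ≤ k ≤ ℓ_b`, and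
`(i'−1)ℓ_b ≤ (i−1)ℓ_b + j − k < (i'−1/2)ℓ_b`, then `i = i'`. -/
theorem gaps_same_bucket (s v i i' j k lb : ℤ) (hs : 2 ≤ s) (hv : 1 ≤ v)
    (hlb : lb = (2*v - 1) * (s - 1) + 2*v)
    (hi1 : 1 ≤ i) (hi2 : i ≤ s) (hi'1 : 1 ≤ i') (hi'2 : i' ≤ s)
    (hj1 : lb < 2*j) (hj2 : j ≤ lb)
    (hk1 : 2 ≤ k) (hk2 : k ≤ lb)
    (h1 : (i' - 1) * lb ≤ (i - 1) * lb + j - k)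
    (h2 : 2 * ((i - 1) * lb + j - k) < (2*i' - 1) * lb) :
    i = i' := by
  have hlbpos : 0 < lb := by nlinarith
  have h3 : i' ≤ i := by
    by_contra h
    have h4 : i + 1 ≤ i' := by omega
    nlinarith [mul_le_mul_of_nonneg_right h4 hlbpos.le]
  by_contra h
  have h4 : i' + 1 ≤ i := by omega
  nlinarith [mul_le_mul_of_nonneg_right h4 hlbpos.le]
end

section
/- Given a finite set W of Wang tiles with colors in {1,…,k}, define for the i-th Wang tile (with colors a,b,c,d on left, right, top, bottom) an A tile with edge colors (upper-left, upper-right, lower-left, lower-right) = (0, c, a, k+i) and a B tile with edge colors (k+i, b, d, 0). Then W admits a Wang tiling of the plane if and only if the resulting AB instance admits an AB tiling. -/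
/-- A Wang tile, with colors on its left, right, top and bottom edges. -/
structure WangTile where
  left : ℕ
  right : ℕ
  top : ℕ
  bottom : ℕ

/-- A Wang tiling of the plane: an assignment of tiles to `ℤ²` (no rotations) such
that adjacent tiles share colors on common edges. -/
def IsWangTiling {n : ℕ} (W : Fin n → WangTile) (f : ℤ × ℤ → Fin n) : Prop :=
  ∀ x y : ℤ,
    (W (f (x, y))).right = (W (f (x + 1, y))).left ∧
    (W (f (x, y))).top = (W (f (x, y + 1))).bottom

/-- An AB tile: a `1×2` vertical rectangle whose two long sides each carry a top and
a bottom color (upper-left, upper-right, lower-left, lower-right). -/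
structure ABTile where
  ul : ℕ
  ur : ℕ
  ll : ℕ
  lr : ℕ

/-- An AB tiling: `a x y` is the index of the `A` tile with lower-left corner
`(2x, 2y)` and `b x y` is the index of the `B` tile with lower-left corner
`(2x+1, 2y+1)`; these tiles cover the plane, and colors must match along every
shared vertical unit edge. -/
def IsABTiling {n : ℕ} (A B : Fin n → ABTile) (a b : ℤ × ℤ → Fin n) : Prop :=
  ∀ x y : ℤ,
    (A (a (x, y))).ur = (B (b (x, y))).ll ∧
    (A (a (x, y))).lr = (B (b (x, y - 1))).ul ∧
    (B (b (x, y))).ur = (A (a (x + 1, y + 1))).ll ∧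
    (B (b (x, y))).lr = (A (a (x + 1, y))).ul

/-- Lemma 2 (AB tiling simulates Wang tiling): given Wang tiles with colors in
`{1,…,k}`, build for the `i`-th Wang tile (colors `a,b,c,d` on left, right, top,
bottom) an `A` tile with colors `(0, c, a, k+i)` and a `B` tile with colors
`(k+i, b, d, 0)`. Then the Wang tiles tile the plane iff the AB instance does. -/
theorem wang_tiling_iff_ab_tiling (n k : ℕ) (W : Fin n → WangTile)
    (hcolors : ∀ i, (W i).left ∈ Set.Icc 1 k ∧ (W i).right ∈ Set.Icc 1 k ∧
      (W i).top ∈ Set.Icc 1 k ∧ (W i).bottom ∈ Set.Icc 1 k) :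
    (∃ f, IsWangTiling W f) ↔
      ∃ a b, IsABTiling
        (fun i => ⟨0, (W i).top, (W i).left, k + 1 + i.val⟩)
        (fun i => ⟨k + 1 + i.val, (W i).right, (W i).bottom, 0⟩) a b := by
  constructor
  · rintro ⟨f, hf⟩
    refine ⟨fun p => f p, fun p => f (p.1, p.2 + 1), fun x y => ?_⟩
    refine ⟨(hf x y).2, by simp, ?_, rfl⟩
    simpa using (hf x (y + 1)).1
  · rintro ⟨a, b, hab⟩
    refine ⟨fun p => a p, fun x y => ?_⟩
    have hba : ∀ x y : ℤ, b (x, y) = a (x, y + 1) := by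
      intro x y
      have h := (hab x (y + 1)).2.1
      simp only at h
      have h2 : y + 1 - 1 = y := by ring
      rw [h2] at h
      exact (Fin.ext (by omega)).symm
    constructor
    · have h := (hab x (y - 1)).2.2.1
      rw [hba x (y - 1)] at h
      have h2 : y - 1 + 1 = y := by ring
      rw [h2] at h
      simpa using h
    · have h := (hab x y).1
      rw [hba x y] at h
      simpa using h
end

section
/- The AB tiling problem is undecidable: there is no algorithm that, given finite sets A and B of colored 1×2 tiles with |A| = |B|, decides whether they admit an AB tiling of the plane. -/
/-- A tile is encoded as a 4-tuple of colors. For a Wang tile the components are the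
left, right, top and bottom colors; for an AB tile they are the upper-left,
upper-right, lower-left and lower-right colors. -/
abbrev Tile := ℕ × ℕ × ℕ × ℕ

/-- The finite list `L` of Wang tiles admits a Wang tiling of the plane: tiles are
assigned to `ℤ²` (no rotations) so that adjacent tiles share colors on common
edges. -/
def WangSolvable (L : List Tile) : Prop :=
  ∃ f : ℤ × ℤ → Fin L.length, ∀ x y : ℤ,
    (L.get (f (x, y))).2.1 = (L.get (f (x + 1, y))).1 ∧
    (L.get (f (x, y))).2.2.1 = (L.get (f (x, y + 1))).2.2.2

/-- The AB instance `(A, B)` (with `|A| = |B|`) admits an AB tiling: `a x y` indexes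
the `A` tile with lower-left corner `(2x, 2y)` and `b x y` indexes the `B` tile with
lower-left corner `(2x+1, 2y+1)`; colors (upper-left, upper-right, lower-left,
lower-right) must match along every shared vertical unit edge. -/
def ABSolvable (A B : List Tile) : Prop :=
  ∃ (a : ℤ × ℤ → Fin A.length) (b : ℤ × ℤ → Fin B.length), ∀ x y : ℤ,
    (A.get (a (x, y))).2.1 = (B.get (b (x, y))).2.2.1 ∧
    (A.get (a (x, y))).2.2.2 = (B.get (b (x, y - 1))).1 ∧
    (B.get (b (x, y))).2.1 = (A.get (a (x + 1, y + 1))).2.2.1 ∧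
    (B.get (b (x, y))).2.2.2 = (A.get (a (x + 1, y))).1

/-- Turn a Wang tile `(l, r, t, b)` into an AB tile `(ul, ur, ll, lr) = (t, r, l, b)`. -/
def abOfWang : Tile → Tile := fun t => (t.2.2.1, t.2.1, t.1, t.2.2.2)

lemma wang_iff_ab (L : List Tile) :
    WangSolvable L ↔ ABSolvable (L.map abOfWang) (L.map abOfWang) := by
  have hlen : (L.map abOfWang).length = L.length := by simp
  constructor
  · rintro ⟨f, hf⟩
    refine ⟨fun p => Fin.cast hlen.symm (f (p.1 + p.2, p.2 - p.1)),
            fun p => Fin.cast hlen.symm (f (p.1 + p.2 + 1, p.2 - p.1)), ?_⟩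
    intro x y
    simp only [List.get_eq_getElem, List.getElem_map, Fin.coe_cast, abOfWang]
    refine ⟨(hf (x + y) (y - x)).1, ?_, ?_, ?_⟩
    · rw [show x + (y - 1) + 1 = x + y from by ring, show (y - 1) - x = y - x - 1 from by ring]
      have h := ((hf (x + y) (y - x - 1)).2).symm
      rw [show y - x - 1 + 1 = y - x from by ring] at h
      exact h
    · rw [show (x + 1) + (y + 1) = x + y + 1 + 1 from by ring,
        show (y + 1) - (x + 1) = y - x from by ring]
      exact (hf (x + y + 1) (y - x)).1
    · rw [show (x + 1) + y = x + y + 1 from by ring,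
        show y - (x + 1) = y - x - 1 from by ring]
      have h := ((hf (x + y + 1) (y - x - 1)).2).symm
      rw [show y - x - 1 + 1 = y - x from by ring] at h
      exact h
  · rintro ⟨a, b, hab⟩
    simp only [List.get_eq_getElem, List.getElem_map, abOfWang] at hab
    refine ⟨fun p =>
      if (p.1 + p.2) % 2 = 0 then Fin.cast hlen (a ((p.1 - p.2) / 2, (p.1 + p.2) / 2))
      else Fin.cast hlen (b ((p.1 - p.2 - 1) / 2, (p.1 + p.2 - 1) / 2)), ?_⟩
    intro x y
    rcases Int.even_or_odd (x + y) with ⟨m, hm⟩ | ⟨m, hm⟩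
    · have h1 : x + y = 2 * m := by omega
      simp only
      rw [if_pos (by omega : (x + y) % 2 = 0),
        if_neg (by omega : ¬ ((x + 1) + y) % 2 = 0),
        if_neg (by omega : ¬ (x + (y + 1)) % 2 = 0),
        show (x - y) / 2 = m - y from by omega, show (x + y) / 2 = m from by omega,
        show ((x + 1) - y - 1) / 2 = m - y from by omega,
        show ((x + 1) + y - 1) / 2 = m from by omega,
        show (x - (y + 1) - 1) / 2 = m - y - 1 from by omega,
        show (x + (y + 1) - 1) / 2 = m from by omega]
      simp only [List.get_eq_getElem, Fin.coe_cast, List.getElem_map, abOfWang]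
      refine ⟨(hab (m - y) m).1, ?_⟩
      have := (hab (m - y - 1) m).2.2.2
      rw [show m - y - 1 + 1 = m - y from by ring] at this
      exact this.symm
    · have h1 : x + y = 2 * m + 1 := by omega
      simp only
      rw [if_neg (by omega : ¬ (x + y) % 2 = 0),
        if_pos (by omega : ((x + 1) + y) % 2 = 0),
        if_pos (by omega : (x + (y + 1)) % 2 = 0),
        show (x - y - 1) / 2 = m - y from by omega, show (x + y - 1) / 2 = m from by omega,
        show ((x + 1) - y) / 2 = m - y + 1 from by omega,
        show ((x + 1) + y) / 2 = m + 1 from by omega,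
        show (x - (y + 1)) / 2 = m - y from by omega,
        show (x + (y + 1)) / 2 = m + 1 from by omega]
      simp only [List.get_eq_getElem, Fin.coe_cast, List.getElem_map, abOfWang]
      refine ⟨(hab (m - y) m).2.2.1, ?_⟩
      have := (hab (m - y) (m + 1)).2.1
      rw [show m + 1 - 1 = m from by ring] at this
      exact this.symm

/-- The AB tiling problem is undecidable: assuming Berger's theorem (no algorithm
decides whether a finite set of Wang tiles tiles the plane), there is no computable
function that, given finite lists `A` and `B` of colored `1×2` tiles with
`|A| = |B|`, decides whether they admit an AB tiling of the plane. -/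
theorem ab_tiling_undecidable
    (hWang : ¬ ∃ f : List Tile → Bool, Computable f ∧
        ∀ L, f L = true ↔ WangSolvable L) :
    ¬ ∃ g : List Tile × List Tile → Bool, Computable g ∧
        ∀ A B, A.length = B.length → (g (A, B) = true ↔ ABSolvable A B) := by
  rintro ⟨g, hgc, hg⟩
  apply hWang
  have hφ : Primrec abOfWang :=
    ((Primrec.fst.comp (Primrec.snd.comp Primrec.snd)).pair
      ((Primrec.fst.comp Primrec.snd).pair
        (Primrec.fst.pair (Primrec.snd.comp (Primrec.snd.comp Primrec.snd)))))
  have hmap : Primrec (fun L : List Tile => L.map abOfWang) :=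
    Primrec.list_map Primrec.id (hφ.comp Primrec.snd).to₂
  refine ⟨fun L => g (L.map abOfWang, L.map abOfWang),
    hgc.comp (Primrec.to_comp (hmap.pair hmap)), fun L => ?_⟩
  rw [hg (L.map abOfWang) (L.map abOfWang) rfl]
  exact (wang_iff_ab L).symm
end

section
/- Let n ≥ 1 and consider edges labeled 1,…,4n+2, each with 8n+4 spots. Edge i has a bump in spot i, a bump in spot 8n+4−j+1 for each j with (i,j) a forbidden pair, and dents elsewhere among spots 1,…,4n+2 and the forbidden-pair spots. When edge i is placed against edge j (so spot p of one edge meets spot 8n+4−p+1 of the other), two bumps coincide at some spot if and only if (i,j) or (j,i) is a forbidden pair. -/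
/-- The bump/dent encoding of forbidden pairs. Edges are labeled `1,…,4n+2`, each
with `8n+4` spots; `F` is the symmetric forbidden-pair relation; `b i p = true`
means edge `i` has a bump in spot `p` (and `b i p = false` means a dent). Edge `i`
has a bump exactly in spot `i` among spots `1,…,4n+2`, and in spot `8n+4−j+1` for
each `j` with `(i,j)` forbidden. When edge `i` is placed against edge `j` (spot `p`
of one meets spot `8n+4−p+1` of the other), two bumps coincide at some spot if and
only if `(i,j)` or `(j,i)` is a forbidden pair. -/
theorem bump_collision_iff_forbidden (n : ℕ) (hn : 1 ≤ n)
    (F : ℕ → ℕ → Prop) (hFsymm : ∀ i j, F i j → F j i)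
    (hFrange : ∀ i j, F i j → 1 ≤ i ∧ i ≤ 4*n+2 ∧ 1 ≤ j ∧ j ≤ 4*n+2)
    (b : ℕ → ℕ → Bool)
    (hb : ∀ i p, 1 ≤ i → i ≤ 4*n+2 → 1 ≤ p → p ≤ 8*n+4 →
      (b i p = true ↔ (p ≤ 4*n+2 ∧ p = i) ∨
        (4*n+2 < p ∧ ∃ j, F i j ∧ p = 8*n+4 - j + 1)))
    (i j : ℕ) (hi1 : 1 ≤ i) (hi2 : i ≤ 4*n+2) (hj1 : 1 ≤ j) (hj2 : j ≤ 4*n+2) :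
    (∃ p, 1 ≤ p ∧ p ≤ 8*n+4 ∧ b i p = true ∧ b j (8*n+4 - p + 1) = true) ↔
      (F i j ∨ F j i) := by
  constructor
  · rintro ⟨p, hp1, hp2, hbi, hbj⟩
    have hq1 : 1 ≤ 8*n+4-p+1 := by omega
    have hq2 : 8*n+4-p+1 ≤ 8*n+4 := by omega
    have H1 := (hb i p hi1 hi2 hp1 hp2).mp hbi
    have H2 := (hb j (8*n+4-p+1) hj1 hj2 hq1 hq2).mp hbj
    rcases H1 with ⟨hple, hpi⟩ | ⟨hpg, k, hFik, hpk⟩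
    · rcases H2 with ⟨hqle, hqj⟩ | ⟨hqg, m, hFjm, hqm⟩
      · omega
      · obtain ⟨_, _, hm1, hm2⟩ := hFrange j m hFjm
        have hmi : m = i := by omega
        exact Or.inr (hmi ▸ hFjm)
    · obtain ⟨_, _, hk1, hk2⟩ := hFrange i k hFik
      rcases H2 with ⟨hqle, hqj⟩ | ⟨hqg, m, hFjm, hqm⟩
      · have hkj : k = j := by omega
        exact Or.inl (hkj ▸ hFik)
      · omega
  · intro h
    have hFji : F j i := h.elim (hFsymm i j) id
    refine ⟨i, hi1, by omega, ?_, ?_⟩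
    · exact (hb i i hi1 hi2 hi1 (by omega)).mpr (Or.inl ⟨hi2, rfl⟩)
    · exact (hb j (8*n+4-i+1) hj1 hj2 (by omega) (by omega)).mpr
        (Or.inr ⟨by omega, i, hFji, rfl⟩)
end
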